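/- arXiv:2605.00009 — 4 statements merged into one kernel-verified Lean document; each statement's English description precedes it below -/
import Mathlib

section
/- Let f, g : α → ℝ be integrable functions on a measure space (α, μ). Then ∫ (1/2)·[f·(sign(f+g) − sign f) + g·(sign(f+g) − sign g)] dμ = 0 if and only if ‖f+g‖_{L¹} = ‖f‖_{L¹} + ‖g‖_{L¹}. (Pythagorean theorem in L¹: the weak inner product vanishes iff the L¹ norms add.) -/
open MeasureTheory

lemma mul_sign_eq_abs (x : ℝ) : x * Real.sign x = |x| := by
  rcases lt_trichotomy x 0 with h | h | h
  · rw [Real.sign_of_neg h, abs_of_neg h]; ring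
  · simp [h]
  · rw [Real.sign_of_pos h, abs_of_pos h]; ring

theorem pythagorean_L1 {α : Type*} [MeasurableSpace α] (μ : Measure α)
    (f g : α → ℝ) (hf : Integrable f μ) (hg : Integrable g μ) :
    (∫ x, (1/2) * (f x * (Real.sign (f x + g x) - Real.sign (f x))
      + g x * (Real.sign (f x + g x) - Real.sign (g x))) ∂μ) = 0 ↔
    (∫ x, |f x + g x| ∂μ) = (∫ x, |f x| ∂μ) + (∫ x, |g x| ∂μ) := by
  have key : ∀ x, (1/2 : ℝ) * (f x * (Real.sign (f x + g x) - Real.sign (f x))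
      + g x * (Real.sign (f x + g x) - Real.sign (g x)))
      = (1/2) * (|f x + g x| - |f x| - |g x|) := by
    intro x
    have h1 := mul_sign_eq_abs (f x + g x)
    have h2 := mul_sign_eq_abs (f x)
    have h3 := mul_sign_eq_abs (g x)
    nlinarith [h1, h2, h3]
  have hfg : Integrable (fun x => |f x + g x|) μ := (hf.add hg).abs
  have hfa : Integrable (fun x => |f x|) μ := hf.abs
  have hga : Integrable (fun x => |g x|) μ := hg.abs
  have : (∫ x, (1/2) * (f x * (Real.sign (f x + g x) - Real.sign (f x))
      + g x * (Real.sign (f x + g x) - Real.sign (g x))) ∂μ)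
      = (1/2) * ((∫ x, |f x + g x| ∂μ) - (∫ x, |f x| ∂μ) - (∫ x, |g x| ∂μ)) := by
    simp_rw [key]
    have h1 : Integrable (fun x => |f x + g x| - |f x|) μ := hfg.sub hfa
    rw [integral_const_mul, integral_sub h1 hga, integral_sub hfg hfa]
  rw [this]
  constructor <;> intro h <;> linarith
end

section
/- Let f, g : α → ℝ be integrable on a measure space μ. Then ‖f+g‖_{L¹(μ)} = ‖f‖_{L¹(μ)} + ‖g‖_{L¹(μ)} if and only if f(x)·g(x) ≥ 0 for μ-almost every x. -/
open MeasureTheory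

lemma abs_add_eq_iff_mul_nonneg (a b : ℝ) : |a + b| = |a| + |b| ↔ 0 ≤ a * b := by
  rcases le_total 0 a with ha | ha <;> rcases le_total 0 b with hb | hb
  · simp [abs_of_nonneg, ha, hb, add_nonneg ha hb, mul_nonneg ha hb]
  · rw [abs_of_nonneg ha, abs_of_nonpos hb]
    constructor
    · intro h; nlinarith [sq_abs (a + b), abs_nonneg (a + b)]
    · intro h
      have h0 : a * b = 0 := le_antisymm (mul_nonpos_of_nonneg_of_nonpos ha hb) h
      rcases mul_eq_zero.1 h0 with h1 | h1 <;> subst h1 <;>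
        simp [abs_of_nonneg ha, abs_of_nonpos hb]
  · rw [abs_of_nonpos ha, abs_of_nonneg hb]
    constructor
    · intro h; nlinarith [sq_abs (a + b), abs_nonneg (a + b)]
    · intro h
      have h0 : a * b = 0 := le_antisymm (mul_nonpos_of_nonpos_of_nonneg ha hb) h
      rcases mul_eq_zero.1 h0 with h1 | h1 <;> subst h1 <;>
        simp [abs_of_nonpos ha, abs_of_nonneg hb]
  · rw [abs_of_nonpos ha, abs_of_nonpos hb, abs_of_nonpos (add_nonpos ha hb)]
    constructor
    · intro _; nlinarith
    · intro _; ring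

theorem L1_norm_add_eq_iff_same_sign {α : Type*} [MeasurableSpace α] (μ : Measure α)
    (f g : α → ℝ) (hf : Integrable f μ) (hg : Integrable g μ) :
    (∫ x, |f x + g x| ∂μ) = (∫ x, |f x| ∂μ) + (∫ x, |g x| ∂μ) ↔
    ∀ᵐ x ∂μ, 0 ≤ f x * g x := by
  have hfa : Integrable (fun x => |f x|) μ := hf.abs
  have hga : Integrable (fun x => |g x|) μ := hg.abs
  have hfga : Integrable (fun x => |f x + g x|) μ := (hf.add hg).abs
  have hsum : Integrable (fun x => |f x| + |g x|) μ := hfa.add hga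
  have hd : Integrable (fun x => |f x| + |g x| - |f x + g x|) μ := hsum.sub hfga
  have hnn : 0 ≤ᵐ[μ] fun x => |f x| + |g x| - |f x + g x| :=
    Filter.Eventually.of_forall fun x => sub_nonneg.2 (abs_add_le _ _)
  have key := integral_eq_zero_iff_of_nonneg_ae hnn hd
  rw [integral_sub hsum hfga, integral_add hfa hga] at key
  constructor
  · intro h
    have h0 : (∫ x, |f x| ∂μ) + (∫ x, |g x| ∂μ) - (∫ x, |f x + g x| ∂μ) = 0 := by
      rw [h]; ring
    have := key.1 h0
    filter_upwards [this] with x hx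
    have hx' : |f x| + |g x| - |f x + g x| = 0 := hx
    exact (abs_add_eq_iff_mul_nonneg (f x) (g x)).1 (by linarith)
  · intro h
    have : (fun x => |f x| + |g x| - |f x + g x|) =ᵐ[μ] 0 := by
      filter_upwards [h] with x hx
      have := (abs_add_eq_iff_mul_nonneg (f x) (g x)).2 hx
      simp [this]
    have h0 := key.2 this
    linarith
end

section
/- Let p > 1, ψ ∈ ℝ, and n ≥ 2 a natural number. The function φ(c) = (n−1)·|ψ − c|^p + |c|^p on ℝ attains its unique minimum at c = ψ·(n−1)^{1/(p−1)} / (1 + (n−1)^{1/(p−1)}). -/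
open Real Set

lemma rpow_tangent_lt {p : ℝ} (hp : 1 < p) {a t : ℝ} (ha : 0 < a) (ht : 0 ≤ t)
    (hne : t ≠ a) : a ^ p + p * a ^ (p - 1) * (t - a) < t ^ p := by
  have hconv := strictConvexOn_rpow hp
  have hd : HasDerivAt (fun x : ℝ => x ^ p) (p * a ^ (p - 1)) a :=
    Real.hasDerivAt_rpow_const (Or.inl ha.ne')
  rcases hne.lt_or_gt with h | h
  · have := hconv.slope_lt_of_hasDerivAt (x := t) (y := a) ht (le_of_lt ha) h hd
    rw [slope_def_field] at this
    have h2 : (0:ℝ) < a - t := by linarith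
    rw [div_lt_iff₀ h2] at this
    nlinarith
  · have := hconv.lt_slope_of_hasDerivAt (x := a) (y := t) (le_of_lt ha) ht h hd
    rw [slope_def_field] at this
    have h2 : (0:ℝ) < t - a := by linarith
    rw [lt_div_iff₀ h2] at this
    nlinarith

lemma pos_tangent_lt {p : ℝ} (hp : 1 < p) {a t : ℝ} (ha : 0 < a) (hne : t ≠ a) :
    a ^ p + p * a ^ (p - 1) * (t - a) < |t| ^ p := by
  rcases le_or_gt 0 t with ht | ht
  · rw [abs_of_nonneg ht]; exact rpow_tangent_lt hp ha ht hne
  · have hap : (0:ℝ) < a ^ (p - 1) := Real.rpow_pos_of_pos ha _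
    have hmul : a ^ (p - 1) * a = a ^ p := by
      rw [← Real.rpow_add_one ha.ne']; ring_nf
    have h1 : p * a ^ (p - 1) * (t - a) ≤ p * a ^ (p - 1) * (0 - a) := by
      have : (0:ℝ) < p * a ^ (p-1) := by positivity
      nlinarith
    have h2 : a ^ p + p * a ^ (p - 1) * (0 - a) < 0 := by
      have hap2 : (0:ℝ) < a ^ p := Real.rpow_pos_of_pos ha _
      nlinarith
    have h3 : (0:ℝ) ≤ |t| ^ p := Real.rpow_nonneg (abs_nonneg t) _
    linarith

lemma abs_tangent_lt {p : ℝ} (hp : 1 < p) {a t : ℝ} (hne : t ≠ a) :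
    |a| ^ p + (p * Real.sign a * |a| ^ (p - 1)) * (t - a) < |t| ^ p := by
  rcases lt_trichotomy a 0 with ha | ha | ha
  · have := pos_tangent_lt hp (t := -t) (neg_pos.mpr ha) (by simpa using neg_injective.ne hne)
    rw [Real.sign_of_neg ha, abs_of_neg ha, ← abs_neg t]
    calc (-a) ^ p + (p * (-1) * (-a) ^ (p - 1)) * (t - a)
        = (-a) ^ p + p * (-a) ^ (p - 1) * (-t - -a) := by ring
      _ < |(-t)| ^ p := this
  · subst ha
    have h1 : t ≠ 0 := hne
    simp only [Real.sign_zero, abs_zero]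
    rw [Real.zero_rpow (by positivity : p ≠ 0)]
    have : (0:ℝ) < |t| ^ p := Real.rpow_pos_of_pos (abs_pos.mpr h1) _
    linarith
  · rw [Real.sign_of_pos ha, abs_of_pos ha]
    have := pos_tangent_lt hp ha hne
    calc a ^ p + (p * 1 * a ^ (p - 1)) * (t - a)
        = a ^ p + p * a ^ (p - 1) * (t - a) := by ring
      _ < |t| ^ p := this

lemma deriv_match {p m ψ cs : ℝ} (hp : 1 < p) (hm : 1 ≤ m)
    (hcs : cs = ψ * m ^ (1 / (p - 1)) / (1 + m ^ (1 / (p - 1)))) :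
    p * Real.sign cs * |cs| ^ (p - 1)
      = m * (p * Real.sign (ψ - cs) * |ψ - cs| ^ (p - 1)) := by
  have hm0 : (0:ℝ) < m := by linarith
  set r := m ^ (1 / (p - 1)) with hrdef
  have hr : 0 < r := Real.rpow_pos_of_pos hm0 _
  have hr1 : (0:ℝ) < 1 + r := by linarith
  have hp1 : (0:ℝ) < p - 1 := by linarith
  have hrp : r ^ (p - 1) = m := by
    rw [hrdef, ← Real.rpow_mul hm0.le, one_div, inv_mul_cancel₀ hp1.ne', Real.rpow_one]
  have hdiff : ψ - cs = ψ / (1 + r) := by rw [hcs]; field_simp; ring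
  have hcs' : cs = ψ * (r / (1 + r)) := by rw [hcs]; ring
  rcases lt_trichotomy ψ 0 with hψ | hψ | hψ
  · have h1 : cs < 0 := by rw [hcs']; exact mul_neg_of_neg_of_pos hψ (by positivity)
    have h2 : ψ - cs < 0 := by rw [hdiff]; exact div_neg_of_neg_of_pos hψ hr1
    rw [Real.sign_of_neg h1, Real.sign_of_neg h2, abs_of_neg h1, abs_of_neg h2]
    have e1 : -cs = (-ψ) * (r / (1 + r)) := by rw [hcs']; ring
    have e2 : -(ψ - cs) = (-ψ) / (1 + r) := by rw [hdiff]; ring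
    rw [e1, e2, Real.mul_rpow (by linarith) (by positivity),
      Real.div_rpow hr.le hr1.le, Real.div_rpow (by linarith : (0:ℝ) ≤ -ψ) hr1.le, hrp]
    ring
  · subst hψ
    have : cs = 0 := by rw [hcs']; ring
    simp [this]
  · have h1 : 0 < cs := by rw [hcs']; positivity
    have h2 : 0 < ψ - cs := by rw [hdiff]; positivity
    rw [Real.sign_of_pos h1, Real.sign_of_pos h2, abs_of_pos h1, abs_of_pos h2, hdiff, hcs']
    rw [Real.mul_rpow hψ.le (by positivity), Real.div_rpow hr.le hr1.le,
      Real.div_rpow hψ.le hr1.le, hrp]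
    ring

lemma main_lt {p m ψ cs : ℝ} (hp : 1 < p) (hm : 1 ≤ m)
    (hcs : cs = ψ * m ^ (1 / (p - 1)) / (1 + m ^ (1 / (p - 1))))
    {c : ℝ} (hne : c ≠ cs) :
    m * |ψ - cs| ^ p + |cs| ^ p < m * |ψ - c| ^ p + |c| ^ p := by
  have hm0 : (0:ℝ) < m := by linarith
  have h1 : |ψ - cs| ^ p + (p * Real.sign (ψ - cs) * |ψ - cs| ^ (p - 1)) * ((ψ - c) - (ψ - cs))
      < |ψ - c| ^ p := abs_tangent_lt hp (by intro h; exact hne (by linarith))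
  have h2 : |cs| ^ p + (p * Real.sign cs * |cs| ^ (p - 1)) * (c - cs) < |c| ^ p :=
    abs_tangent_lt hp hne
  have hD := deriv_match hp hm hcs
  rw [hD] at h2
  have h1' := mul_lt_mul_of_pos_left h1 hm0
  nlinarith [h1', h2]

theorem lp_scalar_minimizer_offdiag1 (p ψ : ℝ) (hp : 1 < p) (n : ℕ) (hn : 2 ≤ n)
    (φ : ℝ → ℝ) (hφ : ∀ c, φ c = ((n : ℝ) - 1) * |ψ - c| ^ p + |c| ^ p)
    (cstar : ℝ)
    (hc : cstar = ψ * ((n : ℝ) - 1) ^ (1 / (p - 1)) / (1 + ((n : ℝ) - 1) ^ (1 / (p - 1)))) :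
    (∀ c, φ cstar ≤ φ c) ∧ (∀ c, c ≠ cstar → φ cstar < φ c) := by
  have hm : (1:ℝ) ≤ (n : ℝ) - 1 := by
    have : (2:ℝ) ≤ (n : ℝ) := by exact_mod_cast hn
    linarith
  have key : ∀ c, c ≠ cstar → φ cstar < φ c := by
    intro c hne
    rw [hφ, hφ]
    exact main_lt hp hm hc hne
  refine ⟨fun c => ?_, key⟩
  by_cases h : c = cstar
  · rw [h]
  · exact (key c h).le
end

section
/- Let f : [−π, π] → ℝ be continuous, even, with min f > 0. Then for every n, the Toeplitz matrix T_n(f) is symmetric positive definite and its spectral condition number satisfies κ₂(T_n(f)) ≤ (max f)/(min f). -/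
open Real
open scoped ComplexOrder

open MeasureTheory intervalIntegral Matrix in
private lemma toep_intexp (m : ℤ) :
    (∫ θ : ℝ in (-π)..π, Complex.exp (-Complex.I * (m : ℂ) * θ)) = if m = 0 then (2*π : ℂ) else 0 := by
  split_ifs with h
  · subst h
    simp only [Int.cast_zero, mul_zero, zero_mul, Complex.exp_zero]
    rw [intervalIntegral.integral_const, Complex.real_smul]
    push_cast
    ring
  · have hm : (m : ℂ) ≠ 0 := Int.cast_ne_zero.mpr h
    have hc : (-Complex.I * (m:ℂ)) ≠ 0 := by simp [Complex.I_ne_zero, hm]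
    rw [integral_exp_mul_complex hc]
    have e2 : Complex.exp (-((π:ℂ) * Complex.I)) = -1 := by
      rw [Complex.exp_neg, Complex.exp_pi_mul_I]
      norm_num
    have h1 : (-Complex.I * (m:ℂ)) * ((π:ℝ):ℂ) = (m:ℤ) * (-((π:ℂ) * Complex.I)) := by push_cast; ring
    have h2 : (-Complex.I * (m:ℂ)) * (((-π:ℝ)):ℂ) = (m:ℤ) * ((π:ℂ) * Complex.I) := by push_cast; ring
    rw [h1, h2, Complex.exp_int_mul, Complex.exp_int_mul, e2, Complex.exp_pi_mul_I, sub_self, zero_div]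

open MeasureTheory intervalIntegral Matrix in
private lemma toep_intervalIntegral_conj {f : ℝ → ℂ} {a b : ℝ} :
    (∫ x in a..b, (starRingEnd ℂ) (f x)) = (starRingEnd ℂ) (∫ x in a..b, f x) := by
  simp [intervalIntegral, ← integral_conj, map_sub]

open MeasureTheory intervalIntegral Matrix in
private lemma toep_integ_aux {f : ℝ → ℝ} (hf : ContinuousOn f (Set.Icc (-π) π)) (g : ℝ → ℂ)
    (hg : Continuous g) :
    IntervalIntegrable (fun θ : ℝ => (f θ : ℂ) * g θ) volume (-π) π := by
  apply ContinuousOn.intervalIntegrable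
  rw [Set.uIcc_of_le (by linarith [pi_pos])]
  exact (Complex.continuous_ofReal.comp_continuousOn hf).mul hg.continuousOn

private lemma toep_hpt {f : ℝ → ℝ} {n : ℕ} (x : Fin n → ℂ) (θ : ℝ) :
      ((f θ * Complex.normSq (∑ j : Fin n, (starRingEnd ℂ) (x j) *
          Complex.exp (-Complex.I * ((j : ℕ) : ℂ) * θ)) : ℝ) : ℂ) =
      ∑ j : Fin n, ∑ k : Fin n, (starRingEnd ℂ) (x j) * x k *
        ((f θ : ℂ) * Complex.exp (-Complex.I * (((j : ℕ) : ℤ) - ((k : ℕ) : ℤ)) * θ)) := by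
    rw [Complex.ofReal_mul, ← Complex.mul_conj]
    have hconj : (starRingEnd ℂ) (∑ k : Fin n, (starRingEnd ℂ) (x k) *
        Complex.exp (-Complex.I * ((k : ℕ) : ℂ) * θ)) =
        ∑ k : Fin n, x k * Complex.exp (Complex.I * ((k : ℕ) : ℂ) * θ) := by
      rw [map_sum]
      refine Finset.sum_congr rfl fun k _ => ?_
      rw [map_mul, Complex.conj_conj, ← Complex.exp_conj]
      congr 1
      simp [map_mul, Complex.conj_ofReal]
    rw [hconj, Finset.sum_mul_sum, Finset.mul_sum]
    refine Finset.sum_congr rfl fun j _ => ?_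
    rw [Finset.mul_sum]
    refine Finset.sum_congr rfl fun k _ => ?_
    rw [show (-Complex.I * ((((j:ℕ):ℤ):ℂ) - (((k:ℕ):ℤ):ℂ)) * (θ:ℂ)) =
      (-Complex.I * ((j:ℕ):ℂ) * θ) + (Complex.I * ((k:ℕ):ℂ) * θ) by push_cast; ring,
      Complex.exp_add]
    ring

open MeasureTheory intervalIntegral Matrix in
private lemma toep_master {f : ℝ → ℝ} (hf : ContinuousOn f (Set.Icc (-π) π)) {n : ℕ} (x : Fin n → ℂ) :
    (∫ θ : ℝ in (-π)..π,
        ((f θ * Complex.normSq (∑ j : Fin n, (starRingEnd ℂ) (x j) *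
          Complex.exp (-Complex.I * ((j : ℕ) : ℂ) * θ)) : ℝ) : ℂ)) =
      ∑ j : Fin n, ∑ k : Fin n, (starRingEnd ℂ) (x j) * x k *
        ∫ θ : ℝ in (-π)..π, (f θ : ℂ) *
          Complex.exp (-Complex.I * (((j : ℕ) : ℤ) - ((k : ℕ) : ℤ)) * θ) := by
  have hint : ∀ (j k : Fin n), IntervalIntegrable (fun θ : ℝ => (f θ:ℂ) *
      Complex.exp (-Complex.I * (((j:ℕ):ℤ) - ((k:ℕ):ℤ)) * θ)) volume (-π) π := by
    intro j k
    exact toep_integ_aux hf _ (by fun_prop)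
  have h1 : ∀ j : Fin n, IntervalIntegrable (fun θ : ℝ => ∑ k : Fin n,
      (starRingEnd ℂ) (x j) * x k *
      ((f θ : ℂ) * Complex.exp (-Complex.I * (((j:ℕ):ℤ) - ((k:ℕ):ℤ)) * θ))) volume (-π) π := by
    intro j
    have h2 := IntervalIntegrable.sum Finset.univ
      (f := fun (k : Fin n) (θ : ℝ) => (starRingEnd ℂ) (x j) * x k *
        ((f θ : ℂ) * Complex.exp (-Complex.I * (((j:ℕ):ℤ) - ((k:ℕ):ℤ)) * θ)))
      (fun k _ => (hint j k).const_mul _)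
    rwa [Finset.sum_fn] at h2
  simp only [toep_hpt]
  rw [intervalIntegral.integral_finset_sum
    (f := fun (j : Fin n) (θ : ℝ) => ∑ k : Fin n, (starRingEnd ℂ) (x j) * x k *
      ((f θ : ℂ) * Complex.exp (-Complex.I * (((j:ℕ):ℤ) - ((k:ℕ):ℤ)) * θ)))
    (fun j _ => h1 j)]
  refine Finset.sum_congr rfl fun j _ => ?_
  rw [intervalIntegral.integral_finset_sum
    (f := fun (k : Fin n) (θ : ℝ) => (starRingEnd ℂ) (x j) * x k *
      ((f θ : ℂ) * Complex.exp (-Complex.I * (((j:ℕ):ℤ) - ((k:ℕ):ℤ)) * θ)))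
    (fun k _ => (hint j k).const_mul _)]
  refine Finset.sum_congr rfl fun k _ => ?_
  exact intervalIntegral.integral_const_mul _ _

open MeasureTheory intervalIntegral Matrix in
private lemma toep_parseval {n : ℕ} (x : Fin n → ℂ) :
    (∫ θ : ℝ in (-π)..π, Complex.normSq (∑ j : Fin n, (starRingEnd ℂ) (x j) *
      Complex.exp (-Complex.I * ((j : ℕ) : ℂ) * θ))) = 2*π*∑ j : Fin n, Complex.normSq (x j) := by
  have h := toep_master (f := fun _ => 1) continuousOn_const x
  simp only [one_mul, Complex.ofReal_one] at h
  rw [intervalIntegral.integral_ofReal] at h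
  have h2 : ∀ j k : Fin n, (∫ θ : ℝ in (-π)..π,
      Complex.exp (-Complex.I * (((j:ℕ):ℤ) - ((k:ℕ):ℤ)) * θ)) = if j = k then (2*π:ℂ) else 0 := by
    intro j k
    have hfe : (fun θ : ℝ => Complex.exp (-Complex.I * ((((j:ℕ):ℤ):ℂ) - (((k:ℕ):ℤ):ℂ)) * θ)) =
        fun θ : ℝ => Complex.exp (-Complex.I * (((((j:ℕ):ℤ) - ((k:ℕ):ℤ)) : ℤ) : ℂ) * θ) := by
      funext θ
      norm_cast
    rw [hfe, toep_intexp]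
    congr 1
    simp [sub_eq_zero, Fin.val_inj]
  simp only [h2] at h
  have h3 : ∀ j : Fin n, ∑ k : Fin n, (starRingEnd ℂ) (x j) * x k * (if j = k then (2*π:ℂ) else 0)
      = ((Complex.normSq (x j) : ℝ) : ℂ) * (2*π:ℂ) := by
    intro j
    rw [Finset.sum_eq_single j]
    · rw [if_pos rfl, ← Complex.normSq_eq_conj_mul_self]
    · intro k _ hkj
      rw [if_neg (Ne.symm hkj), mul_zero]
    · intro hj
      exact absurd (Finset.mem_univ j) hj
  simp only [h3] at h
  have h4 : ∑ j : Fin n, ((Complex.normSq (x j) : ℝ) : ℂ) * (2*π:ℂ)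
      = (((2*π*∑ j : Fin n, Complex.normSq (x j) : ℝ)) : ℂ) := by
    push_cast
    rw [Finset.mul_sum]
    exact Finset.sum_congr rfl fun j _ => by ring
  rw [h4] at h
  exact_mod_cast h

theorem toeplitz_posdef_condition_number (n : ℕ) (hn : 0 < n) (f : ℝ → ℝ)
    (hf : ContinuousOn f (Set.Icc (-π) π)) (hfe : ∀ θ, f (-θ) = f θ)
    (hfpos : 0 < sInf (f '' Set.Icc (-π) π))
    (T : Matrix (Fin n) (Fin n) ℂ)
    (hT : ∀ j k : Fin n, T j k = (1 / (2 * π) : ℂ) *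
      ∫ θ in (-π)..π, (f θ : ℂ) * Complex.exp (-Complex.I * (((j : ℕ) : ℤ) - ((k : ℕ) : ℤ)) * θ)) :
    T.PosDef ∧ (∀ lam ∈ spectrum ℂ T, lam.im = 0) ∧
    ∀ lam ∈ spectrum ℂ T, ∀ mu ∈ spectrum ℂ T,
      lam.re ≤ (sSup (f '' Set.Icc (-π) π) / sInf (f '' Set.Icc (-π) π)) * mu.re := by
  classical
  have hpi := pi_pos
  set m := sInf (f '' Set.Icc (-π) π) with hmdef
  set M := sSup (f '' Set.Icc (-π) π) with hMdef
  have h0mem : (0:ℝ) ∈ Set.Icc (-π) π := ⟨by linarith, by linarith⟩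
  have hcomp : IsCompact (f '' Set.Icc (-π) π) := isCompact_Icc.image_of_continuousOn hf
  have hml : ∀ θ ∈ Set.Icc (-π) π, m ≤ f θ := fun θ hθ => csInf_le hcomp.bddBelow ⟨θ, hθ, rfl⟩
  have hMu : ∀ θ ∈ Set.Icc (-π) π, f θ ≤ M := fun θ hθ => le_csSup hcomp.bddAbove ⟨θ, hθ, rfl⟩
  have hm0 : 0 < m := hfpos
  have hmM : m ≤ M := le_trans (hml 0 h0mem) (hMu 0 h0mem)
  have hM0 : 0 < M := lt_of_lt_of_le hm0 hmM
  have hcont : ∀ x : Fin n → ℂ, Continuous fun θ : ℝ =>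
      Complex.normSq (∑ j : Fin n, (starRingEnd ℂ) (x j) *
        Complex.exp (-Complex.I * ((j:ℕ):ℂ) * θ)) :=
    fun x => Complex.continuous_normSq.comp (by fun_prop)
  -- quadratic form identity
  have hSx : ∀ x : Fin n → ℂ, dotProduct (star x) (T.mulVec x) =
      ((1/(2*π) * ∫ θ : ℝ in (-π)..π, f θ * Complex.normSq (∑ j : Fin n, (starRingEnd ℂ) (x j) *
        Complex.exp (-Complex.I * ((j:ℕ):ℂ) * θ)) : ℝ) : ℂ) := by
    intro x
    have h := toep_master hf x
    have hlhs : dotProduct (star x) (T.mulVec x) = (1/(2*π):ℂ) * ∑ j : Fin n, ∑ k : Fin n,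
        (starRingEnd ℂ) (x j) * x k * ∫ θ : ℝ in (-π)..π, (f θ : ℂ) *
          Complex.exp (-Complex.I * (((j:ℕ):ℤ) - ((k:ℕ):ℤ)) * θ) := by
      simp only [dotProduct, Matrix.mulVec, Pi.star_apply, Complex.star_def, hT]
      rw [Finset.mul_sum]
      refine Finset.sum_congr rfl fun j _ => ?_
      rw [Finset.mul_sum, Finset.mul_sum]
      refine Finset.sum_congr rfl fun k _ => ?_
      ring
    rw [hlhs, ← h, intervalIntegral.integral_ofReal]
    push_cast
    ring
  -- integrability facts
  have hInt1 : ∀ x : Fin n → ℂ, IntervalIntegrable (fun θ : ℝ => f θ *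
      Complex.normSq (∑ j : Fin n, (starRingEnd ℂ) (x j) *
        Complex.exp (-Complex.I * ((j:ℕ):ℂ) * θ))) MeasureTheory.volume (-π) π := by
    intro x
    apply ContinuousOn.intervalIntegrable
    rw [Set.uIcc_of_le (by linarith)]
    exact hf.mul (hcont x).continuousOn
  have hIntc : ∀ (c : ℝ) (x : Fin n → ℂ), IntervalIntegrable (fun θ : ℝ => c *
      Complex.normSq (∑ j : Fin n, (starRingEnd ℂ) (x j) *
        Complex.exp (-Complex.I * ((j:ℕ):ℂ) * θ))) MeasureTheory.volume (-π) π :=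
    fun c x => (Continuous.intervalIntegrable (by fun_prop) _ _)
  -- bounds on the Rayleigh integral
  have hRlow : ∀ x : Fin n → ℂ, m * (2*π*∑ j : Fin n, Complex.normSq (x j)) ≤
      ∫ θ : ℝ in (-π)..π, f θ * Complex.normSq (∑ j : Fin n, (starRingEnd ℂ) (x j) *
        Complex.exp (-Complex.I * ((j:ℕ):ℂ) * θ)) := by
    intro x
    have h := intervalIntegral.integral_mono_on (by linarith : -π ≤ π) (hIntc m x) (hInt1 x)
      (fun θ hθ => mul_le_mul_of_nonneg_right (hml θ hθ) (Complex.normSq_nonneg _))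
    rwa [intervalIntegral.integral_const_mul, toep_parseval] at h
  have hRhigh : ∀ x : Fin n → ℂ, (∫ θ : ℝ in (-π)..π, f θ *
      Complex.normSq (∑ j : Fin n, (starRingEnd ℂ) (x j) *
        Complex.exp (-Complex.I * ((j:ℕ):ℂ) * θ))) ≤
      M * (2*π*∑ j : Fin n, Complex.normSq (x j)) := by
    intro x
    have h := intervalIntegral.integral_mono_on (by linarith : -π ≤ π) (hInt1 x) (hIntc M x)
      (fun θ hθ => mul_le_mul_of_nonneg_right (hMu θ hθ) (Complex.normSq_nonneg _))
    rwa [intervalIntegral.integral_const_mul, toep_parseval] at h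
  have hW : ∀ x : Fin n → ℂ, x ≠ 0 → 0 < ∑ j : Fin n, Complex.normSq (x j) := by
    intro x hx
    obtain ⟨j, hj⟩ := Function.ne_iff.mp hx
    exact Finset.sum_pos' (fun k _ => Complex.normSq_nonneg _)
      ⟨j, Finset.mem_univ j, Complex.normSq_pos.mpr hj⟩
  -- Hermitian
  have hHerm : T.IsHermitian := by
    ext j k
    rw [Matrix.conjTranspose_apply, hT j k, hT k j, Complex.star_def, map_mul]
    have hc0 : (starRingEnd ℂ) (1/(2*π):ℂ) = (1/(2*π):ℂ) := by
      rw [show (1/(2*π):ℂ) = ((1/(2*π):ℝ):ℂ) by push_cast; ring, Complex.conj_ofReal]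
    rw [hc0]
    have hcc := toep_intervalIntegral_conj
      (f := fun θ : ℝ => (f θ : ℂ) * Complex.exp (-Complex.I * (((k:ℕ):ℤ) - ((j:ℕ):ℤ)) * θ))
      (a := -π) (b := π)
    congr 1
    rw [← hcc]
    refine intervalIntegral.integral_congr fun θ _ => ?_
    rw [map_mul, Complex.conj_ofReal, ← Complex.exp_conj]
    congr 1
    simp only [map_mul, map_sub, map_neg, Complex.conj_I, map_intCast, Complex.conj_ofReal]
    push_cast
    ring
  -- positive definiteness
  have hPD : T.PosDef := by
    refine Matrix.PosDef.of_dotProduct_mulVec_pos hHerm fun x hx => ?_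
    rw [hSx x]
    rw [Complex.zero_lt_real]
    have h1 := hRlow x
    have h2 := hW x hx
    have : 0 < m * (2*π*∑ j : Fin n, Complex.normSq (x j)) := by positivity
    have h3 : 0 < ∫ θ : ℝ in (-π)..π, f θ * Complex.normSq (∑ j : Fin n, (starRingEnd ℂ) (x j) *
        Complex.exp (-Complex.I * ((j:ℕ):ℂ) * θ)) := lt_of_lt_of_le this h1
    positivity
  -- eigenvalue bounds
  have heig : ∀ lam ∈ spectrum ℂ T, ∃ v : Fin n → ℂ, v ≠ 0 ∧ T.mulVec v = lam • v := by
    intro lam hl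
    rw [← AlgEquiv.spectrum_eq (Matrix.toLinAlgEquiv' : Matrix (Fin n) (Fin n) ℂ ≃ₐ[ℂ] _) T,
      ← Module.End.hasEigenvalue_iff_mem_spectrum] at hl
    obtain ⟨v, hv⟩ := hl.exists_hasEigenvector
    refine ⟨v, hv.2, ?_⟩
    have h := hv.apply_eq_smul
    rw [show Matrix.toLinAlgEquiv' T = Matrix.mulVecLin T from rfl] at h
    simpa using h
  have hbound : ∀ lam ∈ spectrum ℂ T, lam.im = 0 ∧ m ≤ lam.re ∧ lam.re ≤ M := by
    intro lam hl
    obtain ⟨v, hv0, hvT⟩ := heig lam hl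
    have hWv := hW v hv0
    have hdot : dotProduct (star v) (T.mulVec v) = lam * ((∑ j : Fin n, Complex.normSq (v j) : ℝ) : ℂ) := by
      rw [hvT]
      simp only [dotProduct, Pi.smul_apply, smul_eq_mul, Pi.star_apply, Complex.star_def]
      push_cast
      rw [Finset.mul_sum]
      refine Finset.sum_congr rfl fun j _ => ?_
      rw [Complex.normSq_eq_conj_mul_self]
      ring
    have key : lam * ((∑ j : Fin n, Complex.normSq (v j) : ℝ) : ℂ) =
        ((1/(2*π) * ∫ θ : ℝ in (-π)..π, f θ * Complex.normSq (∑ j : Fin n, (starRingEnd ℂ) (v j) *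
          Complex.exp (-Complex.I * ((j:ℕ):ℂ) * θ)) : ℝ) : ℂ) := by
      rw [← hdot, hSx v]
    have him : lam.im = 0 := by
      have h := congrArg Complex.im key
      simp only [Complex.mul_im, Complex.ofReal_re, Complex.ofReal_im, mul_zero, zero_add,
        zero_mul, add_zero] at h
      rcases mul_eq_zero.mp h with h' | h'
      · exact h'
      · exact absurd h' (ne_of_gt hWv)
    have hre : lam.re * (∑ j : Fin n, Complex.normSq (v j)) =
        1/(2*π) * ∫ θ : ℝ in (-π)..π, f θ * Complex.normSq (∑ j : Fin n, (starRingEnd ℂ) (v j) *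
          Complex.exp (-Complex.I * ((j:ℕ):ℂ) * θ)) := by
      have h := congrArg Complex.re key
      simpa [Complex.mul_re] using h
    have hre2 : 2*π*(lam.re * (∑ j : Fin n, Complex.normSq (v j))) =
        ∫ θ : ℝ in (-π)..π, f θ * Complex.normSq (∑ j : Fin n, (starRingEnd ℂ) (v j) *
          Complex.exp (-Complex.I * ((j:ℕ):ℂ) * θ)) := by
      rw [hre]
      field_simp
    refine ⟨him, ?_, ?_⟩
    · have h6 : (2*π*(∑ j : Fin n, Complex.normSq (v j)))*m ≤
          (2*π*(∑ j : Fin n, Complex.normSq (v j)))*lam.re := by nlinarith [hRlow v]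
      exact le_of_mul_le_mul_left h6 (by positivity)
    · have h6 : (2*π*(∑ j : Fin n, Complex.normSq (v j)))*lam.re ≤
          (2*π*(∑ j : Fin n, Complex.normSq (v j)))*M := by nlinarith [hRhigh v]
      exact le_of_mul_le_mul_left h6 (by positivity)
  refine ⟨hPD, fun lam hl => (hbound lam hl).1, fun lam hl mu hmu => ?_⟩
  obtain ⟨-, -, hlM⟩ := hbound lam hl
  obtain ⟨-, hmum, -⟩ := hbound mu hmu
  calc lam.re ≤ M := hlM
    _ = (M/m)*m := by field_simp
    _ ≤ (M/m)*mu.re := by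
        apply mul_le_mul_of_nonneg_left hmum
        positivity
end
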